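/- Let W^N be the N×N random real symmetric matrix of a Bai–Yin model (independent entries w(i,j), 1≤i≤j, law depending only on whether i<j, with finite fourth moments and mean zero), and assume σ = ‖w(1,2)‖₂ = 1. Fix C > 0 with ρ := ρ_C(w(1,2)) > 0, where for a mean-zero unit-variance variable Z, ρ_C(Z) = ‖Z·1_{|Z|≤C} − E[Z·1_{|Z|≤C}]‖₂ and θ_C(Z) = ‖Z·1_{|Z|>C} − E[Z·1_{|Z|>C}]‖₂. Let Ŵ^N be obtained from W^N by replacing each off-diagonal entry w by (w·1_{|w|≤C} − E[w·1_{|w|≤C}])/ρ and setting diagonal entries to 0. Then almost surely, limsup_{N→∞} ‖(W^N − Ŵ^N)/√N‖ ≤ 2(θ + 1 − ρ), where θ = θ_C(w(1,2)) and ‖·‖ is the operator norm. (One may assume the Bai–Yin theorem: the top singular value of a centered Wigner matrix divided by √N converges a.s. to twice the entry standard deviation.) -/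

import Mathlib

open MeasureTheory ProbabilityTheory Filter

/-- Operator norm (largest singular value) of a square real matrix. -/
noncomputable def matOpNormR {N : ℕ} (M : Matrix (Fin N) (Fin N) ℝ) : ℝ :=
  ‖LinearMap.toContinuousLinearMap (Matrix.toEuclideanLin M)‖

/-- The Wigner matrix `W^N(i,j) = w(min(i,j), max(i,j))` built from the array `w`. -/
def wigMat {Ω : Type*} (w : ℕ → ℕ → Ω → ℝ) (N : ℕ) (ω : Ω) :
    Matrix (Fin N) (Fin N) ℝ :=
  Matrix.of fun i j => w (min i.1 j.1) (max i.1 j.1) ω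

/-- Truncation `Z·1_{|Z|≤C}` of a random variable. -/
noncomputable def truncPart {Ω : Type*} (C : ℝ) (f : Ω → ℝ) (ω : Ω) : ℝ :=
  if |f ω| ≤ C then f ω else 0

/-- Tail `Z·1_{|Z|>C}` of a random variable. -/
noncomputable def tailPart {Ω : Type*} (C : ℝ) (f : Ω → ℝ) (ω : Ω) : ℝ :=
  if |f ω| ≤ C then 0 else f ω

/-- `ρ_C(Z) = ‖Z·1_{|Z|≤C} − E[Z·1_{|Z|≤C}]‖₂`. -/
noncomputable def rhoC {Ω : Type*} [MeasurableSpace Ω] (μ : Measure Ω) (C : ℝ)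
    (f : Ω → ℝ) : ℝ :=
  Real.sqrt (∫ ω, (truncPart C f ω - ∫ ω', truncPart C f ω' ∂μ) ^ 2 ∂μ)

/-- `θ_C(Z) = ‖Z·1_{|Z|>C} − E[Z·1_{|Z|>C}]‖₂`. -/
noncomputable def thetaC {Ω : Type*} [MeasurableSpace Ω] (μ : Measure Ω) (C : ℝ)
    (f : Ω → ℝ) : ℝ :=
  Real.sqrt (∫ ω, (tailPart C f ω - ∫ ω', tailPart C f ω' ∂μ) ^ 2 ∂μ)

/-- The truncated, centered, renormalized matrix `Ŵ^N`: off-diagonal entries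
`(w·1_{|w|≤C} − E[w·1_{|w|≤C}])/ρ`, diagonal entries `0`. -/
noncomputable def hatMat {Ω : Type*} [MeasurableSpace Ω] (μ : Measure Ω) (C ρ : ℝ)
    (w : ℕ → ℕ → Ω → ℝ) (N : ℕ) (ω : Ω) : Matrix (Fin N) (Fin N) ℝ :=
  Matrix.of fun i j =>
    if i = j then 0 else
      (truncPart C (w (min i.1 j.1) (max i.1 j.1)) ω -
        ∫ ω', truncPart C (w (min i.1 j.1) (max i.1 j.1)) ω' ∂μ) / ρ

/-! ### Auxiliary lemmas -/

/-- The truncation function `x ↦ x·1_{|x|≤C}`. -/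
noncomputable def truncFun (C : ℝ) (x : ℝ) : ℝ := if |x| ≤ C then x else 0

/-- The tail function `x ↦ x·1_{|x|>C}`. -/
noncomputable def tailFun (C : ℝ) (x : ℝ) : ℝ := if |x| ≤ C then 0 else x

lemma measurable_truncFun (C : ℝ) : Measurable (truncFun C) :=
  Measurable.ite (measurableSet_le measurable_abs measurable_const) measurable_id
    measurable_const

lemma measurable_tailFun (C : ℝ) : Measurable (tailFun C) :=
  Measurable.ite (measurableSet_le measurable_abs measurable_const) measurable_const
    measurable_id

lemma truncPart_comp {Ω : Type*} (C : ℝ) (f : Ω → ℝ) :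
    truncPart C f = truncFun C ∘ f := rfl

lemma tailPart_comp {Ω : Type*} (C : ℝ) (f : Ω → ℝ) :
    tailPart C f = tailFun C ∘ f := rfl

lemma matOpNormR_add_le {N : ℕ} (A B : Matrix (Fin N) (Fin N) ℝ) :
    matOpNormR (A + B) ≤ matOpNormR A + matOpNormR B := by
  unfold matOpNormR
  rw [map_add, map_add]
  exact norm_add_le _ _

lemma matOpNormR_nonneg {N : ℕ} (A : Matrix (Fin N) (Fin N) ℝ) : 0 ≤ matOpNormR A :=
  norm_nonneg _

theorem baiYin_truncation {Ω : Type*} [MeasurableSpace Ω]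
    (μ : Measure Ω) [IsProbabilityMeasure μ]
    (w : ℕ → ℕ → Ω → ℝ)
    (hindep : iIndepFun
      (fun p : {q : ℕ × ℕ // q.1 ≤ q.2} => w p.1.1 p.1.2) μ)
    (hid_off : ∀ i j : ℕ, i < j → IdentDistrib (w i j) (w 0 1) μ μ)
    (hid_diag : ∀ i : ℕ, IdentDistrib (w i i) (w 0 0) μ μ)
    (hmom_d : MemLp (w 0 0) 4 μ) (hmom_o : MemLp (w 0 1) 4 μ)
    (hmean_d : ∫ ω, w 0 0 ω ∂μ = 0) (hmean_o : ∫ ω, w 0 1 ω ∂μ = 0)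
    (hvar : ∫ ω, (w 0 1 ω) ^ 2 ∂μ = 1)
    (C : ℝ) (hC : 0 < C) (hρ : 0 < rhoC μ C (w 0 1))
    (hBY : ∀ v : ℕ → ℕ → Ω → ℝ,
      iIndepFun
        (fun p : {q : ℕ × ℕ // q.1 ≤ q.2} => v p.1.1 p.1.2) μ →
      (∀ i j : ℕ, i < j → IdentDistrib (v i j) (v 0 1) μ μ) →
      (∀ i : ℕ, IdentDistrib (v i i) (v 0 0) μ μ) →
      MemLp (v 0 0) 4 μ → MemLp (v 0 1) 4 μ →
      (∫ ω, v 0 0 ω ∂μ) = 0 → (∫ ω, v 0 1 ω ∂μ) = 0 →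
      ∀ᵐ ω ∂μ, Tendsto (fun N : ℕ => matOpNormR (wigMat v N ω) / Real.sqrt N)
        atTop (nhds (2 * Real.sqrt (∫ ω', (v 0 1 ω') ^ 2 ∂μ)))) :
    ∀ᵐ ω ∂μ,
      Filter.limsup (fun N : ℕ =>
          matOpNormR (wigMat w N ω - hatMat μ C (rhoC μ C (w 0 1)) w N ω) /
            Real.sqrt N) atTop ≤
        2 * (thetaC μ C (w 0 1) + 1 - rhoC μ C (w 0 1)) := by
  set ρ := rhoC μ C (w 0 1) with hρdef
  set θ := thetaC μ C (w 0 1) with hθdef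
  set mTr := ∫ ω', truncPart C (w 0 1) ω' ∂μ with hmTrdef
  set mT := ∫ ω', tailPart C (w 0 1) ω' ∂μ with hmTdef
  have hρ0 : ρ ≠ 0 := ne_of_gt hρ
  -- basic measurability/integrability
  have hw01sm : AEStronglyMeasurable (w 0 1) μ := hmom_o.aestronglyMeasurable
  have hw01m : AEMeasurable (w 0 1) μ := hw01sm.aemeasurable
  have htrunc_sm : AEStronglyMeasurable (truncPart C (w 0 1)) μ := by
    rw [truncPart_comp]
    exact ((measurable_truncFun C).comp_aemeasurable hw01m).aestronglyMeasurable
  have htrunc_bdd : ∀ ω, |truncPart C (w 0 1) ω| ≤ C := by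
    intro ω
    unfold truncPart
    split
    · assumption
    · simpa using hC.le
  have htrunc4 : MemLp (truncPart C (w 0 1)) 4 μ :=
    MemLp.of_bound htrunc_sm C (Eventually.of_forall fun ω => by
      simpa [Real.norm_eq_abs] using htrunc_bdd ω)
  have htail_eq : ∀ f : Ω → ℝ, tailPart C f = f - truncPart C f := by
    intro f
    funext ω
    simp only [tailPart, truncPart, Pi.sub_apply]
    split <;> simp
  have htail4 : MemLp (tailPart C (w 0 1)) 4 μ := by
    rw [htail_eq]
    exact hmom_o.sub htrunc4
  have h14 : (1 : ENNReal) ≤ 4 := by norm_num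
  have h24 : (2 : ENNReal) ≤ 4 := by norm_num
  have htrunc_int : Integrable (truncPart C (w 0 1)) μ := htrunc4.integrable h14
  have htail_int : Integrable (tailPart C (w 0 1)) μ := htail4.integrable h14
  have hw01_int : Integrable (w 0 1) μ := hmom_o.integrable h14
  have htrunc2 : MemLp (truncPart C (w 0 1)) 2 μ := htrunc4.mono_exponent h24
  have hw012 : MemLp (w 0 1) 2 μ := hmom_o.mono_exponent h24
  -- mT + mTr = 0
  have hmTneg : mT = -mTr := by
    have hsum : mT + mTr = 0 := by
      rw [hmTdef, hmTrdef, ← integral_add htail_int htrunc_int]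
      rw [← hmean_o]
      congr 1
      funext ω
      simp only [tailPart, truncPart, Pi.add_apply]
      split <;> ring
    linarith
  -- ρ ≤ 1
  have hρsq : ρ ^ 2 = ∫ ω, (truncPart C (w 0 1) ω - mTr) ^ 2 ∂μ := by
    rw [hρdef]
    exact Real.sq_sqrt (integral_nonneg fun ω => sq_nonneg _)
  have hvar_eq : ∫ ω, (truncPart C (w 0 1) ω - mTr) ^ 2 ∂μ
      = variance (truncPart C (w 0 1)) μ := by
    rw [variance_eq_integral htrunc2.aestronglyMeasurable.aemeasurable]
  have htruncsq_int : Integrable (fun ω => truncPart C (w 0 1) ω ^ 2) μ :=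
    htrunc2.integrable_sq
  have hwsq_int : Integrable (fun ω => w 0 1 ω ^ 2) μ := hw012.integrable_sq
  have hρle1 : ρ ≤ 1 := by
    have h1 : variance (truncPart C (w 0 1)) μ ≤ ∫ ω, truncPart C (w 0 1) ω ^ 2 ∂μ :=
      variance_le_expectation_sq htrunc_sm
    have h2 : ∫ ω, truncPart C (w 0 1) ω ^ 2 ∂μ ≤ ∫ ω, w 0 1 ω ^ 2 ∂μ := by
      apply integral_mono htruncsq_int hwsq_int
      intro ω
      simp only [truncPart]
      split
      · exact le_rfl
      · simpa using sq_nonneg (w 0 1 ω)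
    nlinarith [hρsq, hvar_eq, hvar, hρ]
  -- the two auxiliary arrays
  set a : ℕ → ℕ → Ω → ℝ :=
    fun i j ω => if i = j then w i j ω else tailPart C (w i j) ω - mT with hadef
  set b : ℕ → ℕ → Ω → ℝ :=
    fun i j ω => if i = j then 0 else
      (1 - 1 / ρ) * (truncPart C (w i j) ω - mTr) with hbdef
  -- independence
  have hindep_a : iIndepFun
      (fun p : {q : ℕ × ℕ // q.1 ≤ q.2} => a p.1.1 p.1.2) μ := by
    have := hindep.comp
      (fun p : {q : ℕ × ℕ // q.1 ≤ q.2} =>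
        if p.1.1 = p.1.2 then (id : ℝ → ℝ) else fun x => tailFun C x - mT)
      (fun p => by
        split
        · exact measurable_id
        · exact (measurable_tailFun C).sub measurable_const)
    convert this using 2 with p
    funext ω
    by_cases h : p.1.1 = p.1.2 <;>
      simp [hadef, h, tailPart, tailFun, Function.comp]
  have hindep_b : iIndepFun
      (fun p : {q : ℕ × ℕ // q.1 ≤ q.2} => b p.1.1 p.1.2) μ := by
    have := hindep.comp
      (fun p : {q : ℕ × ℕ // q.1 ≤ q.2} =>
        if p.1.1 = p.1.2 then (fun _ => (0 : ℝ)) else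
          fun x => (1 - 1 / ρ) * (truncFun C x - mTr))
      (fun p => by
        split
        · exact measurable_const
        · exact (measurable_const.mul ((measurable_truncFun C).sub measurable_const)))
    convert this using 2 with p
    funext ω
    by_cases h : p.1.1 = p.1.2 <;>
      simp [hbdef, h, truncPart, truncFun, Function.comp]
  -- identical distribution
  have hid_off_a : ∀ i j : ℕ, i < j → IdentDistrib (a i j) (a 0 1) μ μ := by
    intro i j hij
    have h1 : a i j = (fun x => tailFun C x - mT) ∘ w i j := by
      funext ω; simp [hadef, hij.ne, tailPart, tailFun, Function.comp]
    have h2 : a 0 1 = (fun x => tailFun C x - mT) ∘ w 0 1 := by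
      funext ω; simp [hadef, tailPart, tailFun, Function.comp]
    rw [h1, h2]
    exact (hid_off i j hij).comp ((measurable_tailFun C).sub measurable_const)
  have hid_off_b : ∀ i j : ℕ, i < j → IdentDistrib (b i j) (b 0 1) μ μ := by
    intro i j hij
    have h1 : b i j = (fun x => (1 - 1 / ρ) * (truncFun C x - mTr)) ∘ w i j := by
      funext ω; simp [hbdef, hij.ne, truncPart, truncFun, Function.comp]
    have h2 : b 0 1 = (fun x => (1 - 1 / ρ) * (truncFun C x - mTr)) ∘ w 0 1 := by
      funext ω; simp [hbdef, truncPart, truncFun, Function.comp]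
    rw [h1, h2]
    exact (hid_off i j hij).comp
      (measurable_const.mul ((measurable_truncFun C).sub measurable_const))
  have hid_diag_a : ∀ i : ℕ, IdentDistrib (a i i) (a 0 0) μ μ := by
    intro i
    have h1 : a i i = w i i := by funext ω; simp [hadef]
    have h2 : a 0 0 = w 0 0 := by funext ω; simp [hadef]
    rw [h1, h2]; exact hid_diag i
  have hid_diag_b : ∀ i : ℕ, IdentDistrib (b i i) (b 0 0) μ μ := by
    intro i
    have h1 : b i i = fun _ => (0 : ℝ) := by funext ω; simp [hbdef]
    have h2 : b 0 0 = fun _ => (0 : ℝ) := by funext ω; simp [hbdef]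
    rw [h1, h2]
    exact IdentDistrib.refl aemeasurable_const
  -- pointwise descriptions
  have ha01 : a 0 1 = fun ω => tailPart C (w 0 1) ω - mT := by
    funext ω; simp [hadef]
  have ha00 : a 0 0 = w 0 0 := by funext ω; simp [hadef]
  have hb01 : b 0 1 = fun ω => (1 - 1 / ρ) * (truncPart C (w 0 1) ω - mTr) := by
    funext ω; simp [hbdef]
  have hb00 : b 0 0 = fun _ => (0 : ℝ) := by funext ω; simp [hbdef]
  -- moments
  have hmom_a_d : MemLp (a 0 0) 4 μ := by rw [ha00]; exact hmom_d
  have hmom_a_o : MemLp (a 0 1) 4 μ := by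
    rw [ha01]
    exact htail4.sub (memLp_const mT)
  have hmom_b_d : MemLp (b 0 0) 4 μ := by rw [hb00]; exact memLp_const 0
  have hmom_b_o : MemLp (b 0 1) 4 μ := by
    rw [hb01]
    exact (htrunc4.sub (memLp_const mTr)).const_mul _
  -- means
  have hmean_a_d : ∫ ω, a 0 0 ω ∂μ = 0 := by rw [ha00]; exact hmean_d
  have hmean_a_o : ∫ ω, a 0 1 ω ∂μ = 0 := by
    rw [ha01, integral_sub htail_int (integrable_const mT)]
    simp [hmTdef]
  have hmean_b_d : ∫ ω, b 0 0 ω ∂μ = 0 := by rw [hb00]; simp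
  have hmean_b_o : ∫ ω, b 0 1 ω ∂μ = 0 := by
    rw [hb01]
    rw [integral_const_mul, integral_sub htrunc_int (integrable_const mTr)]
    simp [hmTrdef]
  -- values of the limits
  have hL_a : 2 * Real.sqrt (∫ ω', (a 0 1 ω') ^ 2 ∂μ) = 2 * θ := by
    rw [ha01]
    rfl
  have hL_b : 2 * Real.sqrt (∫ ω', (b 0 1 ω') ^ 2 ∂μ) = 2 * (1 - ρ) := by
    rw [hb01]
    have : ∫ ω', ((1 - 1 / ρ) * (truncPart C (w 0 1) ω' - mTr)) ^ 2 ∂μ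
        = (1 - 1 / ρ) ^ 2 * ∫ ω', (truncPart C (w 0 1) ω' - mTr) ^ 2 ∂μ := by
      rw [← integral_const_mul]
      congr 1
      funext ω
      ring
    rw [this, ← hρsq, Real.sqrt_mul (sq_nonneg _), Real.sqrt_sq_eq_abs,
      Real.sqrt_sq hρ.le]
    have h1ρ : |1 - 1 / ρ| = 1 / ρ - 1 := by
      rw [abs_of_nonpos]
      · ring
      · have : (1 : ℝ) ≤ 1 / ρ := one_le_one_div hρ hρle1
        linarith
    rw [h1ρ]
    field_simp
  -- matrix decomposition
  have hint_trunc : ∀ i j : ℕ, i < j →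
      ∫ ω', truncPart C (w i j) ω' ∂μ = mTr := by
    intro i j hij
    rw [hmTrdef, truncPart_comp, truncPart_comp]
    exact ((hid_off i j hij).comp (measurable_truncFun C)).integral_eq
  have hmatdec : ∀ (N : ℕ) (ω : Ω),
      wigMat w N ω - hatMat μ C ρ w N ω = wigMat a N ω + wigMat b N ω := by
    intro N ω
    ext i j
    simp only [wigMat, hatMat, Matrix.sub_apply, Matrix.add_apply, Matrix.of_apply]
    by_cases hij : i = j
    · subst hij
      simp [hadef, hbdef]
    · have hne : i.1 ≠ j.1 := fun h => hij (Fin.ext h)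
      have hminmax : min i.1 j.1 ≠ max i.1 j.1 := by omega
      have hlt : min i.1 j.1 < max i.1 j.1 := lt_of_le_of_ne (min_le_max) hminmax
      rw [if_neg hij]
      rw [hadef, hbdef]
      simp only [if_neg hminmax]
      rw [hint_trunc _ _ hlt]
      have htp := congrFun (htail_eq (w (min i.1 j.1) (max i.1 j.1))) ω
      simp only [Pi.sub_apply] at htp
      rw [htp, hmTneg]
      field_simp
      ring
  -- conclusion
  filter_upwards [hBY a hindep_a hid_off_a hid_diag_a hmom_a_d hmom_a_o hmean_a_d hmean_a_o,
    hBY b hindep_b hid_off_b hid_diag_b hmom_b_d hmom_b_o hmean_b_d hmean_b_o] with ω hta htb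
  rw [hL_a] at hta
  rw [hL_b] at htb
  have hsum : Tendsto
      (fun N : ℕ => matOpNormR (wigMat a N ω) / Real.sqrt N
        + matOpNormR (wigMat b N ω) / Real.sqrt N) atTop
      (nhds (2 * θ + 2 * (1 - ρ))) := hta.add htb
  have hmain : ∀ N : ℕ,
      matOpNormR (wigMat w N ω - hatMat μ C ρ w N ω) / Real.sqrt N
        ≤ matOpNormR (wigMat a N ω) / Real.sqrt N
          + matOpNormR (wigMat b N ω) / Real.sqrt N := by
    intro N
    rw [← add_div, hmatdec N ω]
    rw [div_eq_mul_inv, div_eq_mul_inv]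
    exact mul_le_mul_of_nonneg_right (matOpNormR_add_le _ _)
      (inv_nonneg.2 (Real.sqrt_nonneg _))
  have hnn : ∀ N : ℕ,
      0 ≤ matOpNormR (wigMat w N ω - hatMat μ C ρ w N ω) / Real.sqrt N := by
    intro N
    exact div_nonneg (matOpNormR_nonneg _) (Real.sqrt_nonneg _)
  calc Filter.limsup (fun N : ℕ =>
        matOpNormR (wigMat w N ω - hatMat μ C ρ w N ω) / Real.sqrt N) atTop
      ≤ Filter.limsup (fun N : ℕ => matOpNormR (wigMat a N ω) / Real.sqrt N
          + matOpNormR (wigMat b N ω) / Real.sqrt N) atTop := by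
        exact Filter.limsup_le_limsup (Eventually.of_forall hmain)
          (isCoboundedUnder_le_of_eventually_le atTop (Eventually.of_forall hnn))
          hsum.isBoundedUnder_le
    _ = 2 * θ + 2 * (1 - ρ) := hsum.limsup_eq
    _ = 2 * (θ + 1 - ρ) := by ring
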